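/- Let Q be a non-attacking set of queens on the (n,d)-board with d ≥ 2, let j ∈ {1,…,d} and i ∈ {1,…,n}. Then the queens of Q lying in the i-th layer in the j-th dimension, projected onto the remaining d−1 coordinates, form a non-attacking set on the (n,d−1)-board; hence |{q ∈ Q : q_j = i}| ≤ Q_max(n, d−1). -/
import Mathlib


/-- A point `q` lies on the `(n,d)`-board, i.e. all coordinates are in `{1,…,n}`. -/
def onBoard (n d : ℕ) (q : Fin d → ℕ) : Prop :=
  ∀ i, 1 ≤ q i ∧ q i ≤ n

/-- Queen `a` attacks queen `b`: there are an integer `m` and a nonzero vector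
`ε ∈ {-1,0,1}^d` with `a i = ε i * m + b i` for all `i`. -/
def attacks {d : ℕ} (a b : Fin d → ℕ) : Prop :=
  ∃ (m : ℤ) (ε : Fin d → ℤ), (∀ i, ε i = -1 ∨ ε i = 0 ∨ ε i = 1) ∧ ε ≠ 0 ∧
    ∀ i, (a i : ℤ) = ε i * m + (b i : ℤ)

/-- A set of queens is non-attacking if no two distinct members attack each other. -/
def nonAttacking {d : ℕ} (Q : Finset (Fin d → ℕ)) : Prop :=
  ∀ a ∈ Q, ∀ b ∈ Q, a ≠ b → ¬ attacks a b

/-- A partial solution on the `(n,d)`-board: a non-attacking set fitting the board. -/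
def isPartial (n d : ℕ) (Q : Finset (Fin d → ℕ)) : Prop :=
  (∀ q ∈ Q, onBoard n d q) ∧ nonAttacking Q

/-- A solution to the `(n,d)`-queens problem: a non-attacking set of `n^(d-1)` queens. -/
def isSolution (n d : ℕ) (Q : Finset (Fin d → ℕ)) : Prop :=
  isPartial n d Q ∧ Q.card = n ^ (d - 1)

/-- The `(n,d)`-board as a finite set. -/
def boardFinset (n d : ℕ) : Finset (Fin d → ℕ) :=
  Fintype.piFinset fun _ => Finset.Icc 1 n

/-- `Qmax n d` : the maximum cardinality of a non-attacking set on the `(n,d)`-board. -/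
noncomputable def Qmax (n d : ℕ) : ℕ :=
  sSup {k | ∃ Q : Finset (Fin d → ℕ), isPartial n d Q ∧ Q.card = k}

/-- Layer inequality: for a non-attacking set `Q` on the `(n,d+1)`-board (a board of
dimension `≥ 2`), the queens in the `i`-th layer in the `j`-th dimension, projected
onto the remaining `d` coordinates, form a non-attacking set on the `(n,d)`-board;
hence the number of queens of `Q` in that layer is at most `Qmax(n,d)`. -/
theorem layer_inequality (n d : ℕ) (hn : 1 ≤ n) (hd : 1 ≤ d)
    (Q : Finset (Fin (d + 1) → ℕ)) (hQ : isPartial n (d + 1) Q)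
    (j : Fin (d + 1)) (i : ℕ) (hi1 : 1 ≤ i) (hin : i ≤ n) :
    isPartial n d
      ((Q.filter (fun q => q j = i)).image
        (fun q (l : Fin d) => q (j.succAbove l))) ∧
    (Q.filter (fun q => q j = i)).card ≤ Qmax n d := by

  classical
  obtain ⟨hboard, hatk⟩ := hQ
  -- injectivity of projection on the layer
  have hinj : Set.InjOn (fun (q : Fin (d+1) → ℕ) (l : Fin d) => q (j.succAbove l))
      ↑(Q.filter (fun q => q j = i)) := by
    intro a ha b hb hab
    simp only [Finset.coe_filter, Set.mem_setOf_eq, Finset.mem_filter] at ha hb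
    funext k
    rcases eq_or_ne k j with rfl | hk
    · rw [ha.2, hb.2]
    · obtain ⟨l, rfl⟩ := Fin.exists_succAbove_eq hk
      exact congrFun hab l
  have hpartial : isPartial n d
      ((Q.filter (fun q => q j = i)).image
        (fun q (l : Fin d) => q (j.succAbove l))) := by
    constructor
    · intro q hq
      simp only [Finset.mem_image, Finset.mem_filter] at hq
      obtain ⟨a, ⟨haQ, _⟩, rfl⟩ := hq
      intro l
      exact hboard a haQ (j.succAbove l)
    · intro a' ha' b' hb' hne hatk'
      simp only [Finset.mem_image, Finset.mem_filter] at ha' hb'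
      obtain ⟨a, ⟨haQ, haj⟩, rfl⟩ := ha'
      obtain ⟨b, ⟨hbQ, hbj⟩, rfl⟩ := hb'
      have hab : a ≠ b := by rintro rfl; exact hne rfl
      obtain ⟨m, ε, hε01, hε0, heq⟩ := hatk'
      apply hatk a haQ b hbQ hab
      refine ⟨m, j.insertNth 0 ε, ?_, ?_, ?_⟩
      · intro k
        rcases eq_or_ne k j with rfl | hk
        · right; left; simp
        · obtain ⟨l, rfl⟩ := Fin.exists_succAbove_eq hk
          rw [Fin.insertNth_apply_succAbove]
          exact hε01 l
      · intro h
        apply hε0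
        funext l
        have := congrFun h (j.succAbove l)
        rwa [Fin.insertNth_apply_succAbove] at this
      · intro k
        rcases eq_or_ne k j with rfl | hk
        · rw [haj, hbj, Fin.insertNth_apply_same]; ring
        · obtain ⟨l, rfl⟩ := Fin.exists_succAbove_eq hk
          rw [Fin.insertNth_apply_succAbove]
          exact heq l
  refine ⟨hpartial, ?_⟩
  have hcard : (Q.filter (fun q => q j = i)).card =
      ((Q.filter (fun q => q j = i)).image
        (fun q (l : Fin d) => q (j.succAbove l))).card :=
    (Finset.card_image_of_injOn hinj).symm
  rw [hcard]
  apply le_csSup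
  · -- bounded above by board cardinality
    refine ⟨(boardFinset n d).card, ?_⟩
    rintro k ⟨P, ⟨hPb, _⟩, rfl⟩
    apply Finset.card_le_card
    intro q hq
    simp only [boardFinset, Fintype.mem_piFinset, Finset.mem_Icc]
    exact hPb q hq
  · exact ⟨_, hpartial, rfl⟩
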